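/- arXiv:2101.04742 — 2 statements merged into one kernel-verified Lean document; each statement's English description precedes it below -/
import Mathlib

section
/- Modal Proposition Constant Substitution: If every environment σ ∈ β satisfies σ(x) = c, and there exists some σ ∈ β with σ(x) = c (so β is nonempty), then for every existential proposition p∃: β ⊨ p∃ if and only if β ⊨ p∃[c/x], where p∃[c/x] substitutes the constant c for the variable x throughout p∃. -/
namespace BLIMP

/-- Program variables. -/
abbrev Var := String
/-- Quantified variables (drawn from a set disjoint from the program
variables, which we model with a separate constructor). -/
abbrev QVar := String
/-- Values. -/
abbrev Val := ℤ
/-- An environment maps program variables to values. -/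
abbrev Env := Var → Val
/-- A belief state is a set of environments. -/
abbrev Belief := Set Env

/-- Expressions: program variables, constants, quantified variables, and
arithmetic operators. -/
inductive Exp
  | var (x : Var)
  | const (c : Val)
  | qvar (y : QVar)
  | add (e₁ e₂ : Exp)
  | sub (e₁ e₂ : Exp)
  | mul (e₁ e₂ : Exp)
  | div (e₁ e₂ : Exp)

/-- Big-step evaluation of expressions: `⟨σ, e⟩ ⇓ c` (there is no rule for
quantified variables, which must be substituted away before evaluation). -/
inductive Eval : Env → Exp → Val → Prop
  | var (σ : Env) (x : Var) : Eval σ (.var x) (σ x)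
  | const (σ : Env) (c : Val) : Eval σ (.const c) c
  | add {σ e₁ e₂ c₁ c₂} : Eval σ e₁ c₁ → Eval σ e₂ c₂ → Eval σ (.add e₁ e₂) (c₁ + c₂)
  | sub {σ e₁ e₂ c₁ c₂} : Eval σ e₁ c₁ → Eval σ e₂ c₂ → Eval σ (.sub e₁ e₂) (c₁ - c₂)
  | mul {σ e₁ e₂ c₁ c₂} : Eval σ e₁ c₁ → Eval σ e₂ c₂ → Eval σ (.mul e₁ e₂) (c₁ * c₂)
  | div {σ e₁ e₂ c₁ c₂} : Eval σ e₁ c₁ → Eval σ e₂ c₂ → Eval σ (.div e₁ e₂) (c₁ / c₂)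

/-- Propositions. -/
inductive Pprop
  | bconst (b : Bool)
  | lt (e₁ e₂ : Exp)
  | eq (e₁ e₂ : Exp)
  | and (p₁ p₂ : Pprop)
  | or (p₁ p₂ : Pprop)
  | not (p : Pprop)

/-- Satisfaction of a proposition by an environment: `σ ⊨ p`. -/
def Sat (σ : Env) : Pprop → Prop
  | .bconst b => b = true
  | .lt e₁ e₂ => ∃ c₁ c₂, Eval σ e₁ c₁ ∧ Eval σ e₂ c₂ ∧ c₁ < c₂
  | .eq e₁ e₂ => ∃ c₁ c₂, Eval σ e₁ c₁ ∧ Eval σ e₂ c₂ ∧ c₁ = c₂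
  | .and p₁ p₂ => Sat σ p₁ ∧ Sat σ p₂
  | .or p₁ p₂ => Sat σ p₁ ∨ Sat σ p₂
  | .not p => ¬ Sat σ p

/-- Modal propositions, built from `□p` and `◇p` by `&&`, `||`, `!`. -/
inductive MProp
  | box (p : Pprop)
  | dia (p : Pprop)
  | and (P₁ P₂ : MProp)
  | or (P₁ P₂ : MProp)
  | not (P : MProp)

/-- Satisfaction of a modal proposition by a belief state: `β ⊨ P□`. -/
def MSat (β : Belief) : MProp → Prop
  | .box p => ∀ σ ∈ β, Sat σ p
  | .dia p => ∃ σ ∈ β, Sat σ p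
  | .and P₁ P₂ => MSat β P₁ ∧ MSat β P₂
  | .or P₁ P₂ => MSat β P₁ ∨ MSat β P₂
  | .not P => ¬ MSat β P

/-- `e.substQ y c` substitutes the constant `c` for the quantified variable `y`. -/
def Exp.substQ : Exp → QVar → Val → Exp
  | .var x, _, _ => .var x
  | .const c', _, _ => .const c'
  | .qvar y', y, c => if y' = y then .const c else .qvar y'
  | .add e₁ e₂, y, c => .add (e₁.substQ y c) (e₂.substQ y c)
  | .sub e₁ e₂, y, c => .sub (e₁.substQ y c) (e₂.substQ y c)
  | .mul e₁ e₂, y, c => .mul (e₁.substQ y c) (e₂.substQ y c)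
  | .div e₁ e₂, y, c => .div (e₁.substQ y c) (e₂.substQ y c)

def Pprop.substQ : Pprop → QVar → Val → Pprop
  | .bconst b, _, _ => .bconst b
  | .lt e₁ e₂, y, c => .lt (e₁.substQ y c) (e₂.substQ y c)
  | .eq e₁ e₂, y, c => .eq (e₁.substQ y c) (e₂.substQ y c)
  | .and p₁ p₂, y, c => .and (p₁.substQ y c) (p₂.substQ y c)
  | .or p₁ p₂, y, c => .or (p₁.substQ y c) (p₂.substQ y c)
  | .not p, y, c => .not (p.substQ y c)

def MProp.substQ : MProp → QVar → Val → MProp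
  | .box p, y, c => .box (p.substQ y c)
  | .dia p, y, c => .dia (p.substQ y c)
  | .and P₁ P₂, y, c => .and (P₁.substQ y c) (P₂.substQ y c)
  | .or P₁ P₂, y, c => .or (P₁.substQ y c) (P₂.substQ y c)
  | .not P, y, c => .not (P.substQ y c)

/-- Satisfaction of an existential proposition `∃ ŷ. P□` by a belief state,
by recursion on the list of quantified variables. -/
def ESatAux (β : Belief) : List QVar → MProp → Prop
  | [], P => MSat β P
  | y :: ys, P => ∃ c : Val, ESatAux β ys (P.substQ y c)

/-- `e.substConst x c` substitutes the constant `c` for the program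
variable `x`. -/
def Exp.substConst : Exp → Var → Val → Exp
  | .var z, x, c => if z = x then .const c else .var z
  | .const c', _, _ => .const c'
  | .qvar y, _, _ => .qvar y
  | .add e₁ e₂, x, c => .add (e₁.substConst x c) (e₂.substConst x c)
  | .sub e₁ e₂, x, c => .sub (e₁.substConst x c) (e₂.substConst x c)
  | .mul e₁ e₂, x, c => .mul (e₁.substConst x c) (e₂.substConst x c)
  | .div e₁ e₂, x, c => .div (e₁.substConst x c) (e₂.substConst x c)

def Pprop.substConst : Pprop → Var → Val → Pprop
  | .bconst b, _, _ => .bconst b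
  | .lt e₁ e₂, x, c => .lt (e₁.substConst x c) (e₂.substConst x c)
  | .eq e₁ e₂, x, c => .eq (e₁.substConst x c) (e₂.substConst x c)
  | .and p₁ p₂, x, c => .and (p₁.substConst x c) (p₂.substConst x c)
  | .or p₁ p₂, x, c => .or (p₁.substConst x c) (p₂.substConst x c)
  | .not p, x, c => .not (p.substConst x c)

def MProp.substConst : MProp → Var → Val → MProp
  | .box p, x, c => .box (p.substConst x c)
  | .dia p, x, c => .dia (p.substConst x c)
  | .and P₁ P₂, x, c => .and (P₁.substConst x c) (P₂.substConst x c)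
  | .or P₁ P₂, x, c => .or (P₁.substConst x c) (P₂.substConst x c)
  | .not P, x, c => .not (P.substConst x c)

lemma eval_substConst {σ : Env} {x : Var} {c : Val} (h : σ x = c) :
    ∀ e v, Eval σ (e.substConst x c) v ↔ Eval σ e v := by
  intro e
  induction e with
  | var z =>
    intro v
    simp only [Exp.substConst]
    split
    · subst h
      rename_i hz; subst hz
      constructor
      · rintro ⟨⟩; exact .var σ z
      · rintro ⟨⟩; exact .const σ (σ z)
    · rfl
  | const c' => intro v; rfl
  | qvar y => intro v; rfl
  | add e₁ e₂ ih₁ ih₂ =>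
    intro v
    constructor
    · intro hv
      cases hv with
      | add h₁ h₂ => exact .add ((ih₁ _).mp h₁) ((ih₂ _).mp h₂)
    · intro hv
      cases hv with
      | add h₁ h₂ => exact .add ((ih₁ _).mpr h₁) ((ih₂ _).mpr h₂)
  | sub e₁ e₂ ih₁ ih₂ =>
    intro v
    constructor
    · intro hv
      cases hv with
      | sub h₁ h₂ => exact .sub ((ih₁ _).mp h₁) ((ih₂ _).mp h₂)
    · intro hv
      cases hv with
      | sub h₁ h₂ => exact .sub ((ih₁ _).mpr h₁) ((ih₂ _).mpr h₂)
  | mul e₁ e₂ ih₁ ih₂ =>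
    intro v
    constructor
    · intro hv
      cases hv with
      | mul h₁ h₂ => exact .mul ((ih₁ _).mp h₁) ((ih₂ _).mp h₂)
    · intro hv
      cases hv with
      | mul h₁ h₂ => exact .mul ((ih₁ _).mpr h₁) ((ih₂ _).mpr h₂)
  | div e₁ e₂ ih₁ ih₂ =>
    intro v
    constructor
    · intro hv
      cases hv with
      | div h₁ h₂ => exact .div ((ih₁ _).mp h₁) ((ih₂ _).mp h₂)
    · intro hv
      cases hv with
      | div h₁ h₂ => exact .div ((ih₁ _).mpr h₁) ((ih₂ _).mpr h₂)

lemma sat_substConst {σ : Env} {x : Var} {c : Val} (h : σ x = c) :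
    ∀ p, Sat σ (p.substConst x c) ↔ Sat σ p := by
  intro p
  induction p with
  | bconst b => rfl
  | lt e₁ e₂ =>
    simp only [Pprop.substConst, Sat]
    constructor
    · rintro ⟨c₁, c₂, h₁, h₂, hlt⟩
      exact ⟨c₁, c₂, (eval_substConst h _ _).mp h₁, (eval_substConst h _ _).mp h₂, hlt⟩
    · rintro ⟨c₁, c₂, h₁, h₂, hlt⟩
      exact ⟨c₁, c₂, (eval_substConst h _ _).mpr h₁, (eval_substConst h _ _).mpr h₂, hlt⟩
  | eq e₁ e₂ =>
    simp only [Pprop.substConst, Sat]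
    constructor
    · rintro ⟨c₁, c₂, h₁, h₂, hlt⟩
      exact ⟨c₁, c₂, (eval_substConst h _ _).mp h₁, (eval_substConst h _ _).mp h₂, hlt⟩
    · rintro ⟨c₁, c₂, h₁, h₂, hlt⟩
      exact ⟨c₁, c₂, (eval_substConst h _ _).mpr h₁, (eval_substConst h _ _).mpr h₂, hlt⟩
  | and p₁ p₂ ih₁ ih₂ => simp only [Pprop.substConst, Sat]; rw [ih₁, ih₂]
  | or p₁ p₂ ih₁ ih₂ => simp only [Pprop.substConst, Sat]; rw [ih₁, ih₂]
  | not p ih => simp only [Pprop.substConst, Sat]; rw [ih]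

lemma msat_substConst {β : Belief} {x : Var} {c : Val}
    (hall : ∀ σ ∈ β, σ x = c) :
    ∀ P, MSat β (P.substConst x c) ↔ MSat β P := by
  intro P
  induction P with
  | box p =>
    simp only [MProp.substConst, MSat]
    constructor
    · intro h σ hσ; exact (sat_substConst (hall σ hσ) p).mp (h σ hσ)
    · intro h σ hσ; exact (sat_substConst (hall σ hσ) p).mpr (h σ hσ)
  | dia p =>
    simp only [MProp.substConst, MSat]
    constructor
    · rintro ⟨σ, hσ, hs⟩; exact ⟨σ, hσ, (sat_substConst (hall σ hσ) p).mp hs⟩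
    · rintro ⟨σ, hσ, hs⟩; exact ⟨σ, hσ, (sat_substConst (hall σ hσ) p).mpr hs⟩
  | and P₁ P₂ ih₁ ih₂ => simp only [MProp.substConst, MSat]; rw [ih₁, ih₂]
  | or P₁ P₂ ih₁ ih₂ => simp only [MProp.substConst, MSat]; rw [ih₁, ih₂]
  | not P ih => simp only [MProp.substConst, MSat]; rw [ih]

lemma exp_substQ_substConst (e : Exp) (y : QVar) (d : Val) (x : Var) (c : Val) :
    (e.substQ y d).substConst x c = (e.substConst x c).substQ y d := by
  induction e with
  | var z => simp only [Exp.substQ, Exp.substConst]; split <;> rfl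
  | const c' => rfl
  | qvar y' => simp only [Exp.substQ, Exp.substConst]; split <;> rfl
  | add e₁ e₂ ih₁ ih₂ => simp only [Exp.substQ, Exp.substConst, ih₁, ih₂]
  | sub e₁ e₂ ih₁ ih₂ => simp only [Exp.substQ, Exp.substConst, ih₁, ih₂]
  | mul e₁ e₂ ih₁ ih₂ => simp only [Exp.substQ, Exp.substConst, ih₁, ih₂]
  | div e₁ e₂ ih₁ ih₂ => simp only [Exp.substQ, Exp.substConst, ih₁, ih₂]

lemma pprop_substQ_substConst (p : Pprop) (y : QVar) (d : Val) (x : Var) (c : Val) :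
    (p.substQ y d).substConst x c = (p.substConst x c).substQ y d := by
  induction p with
  | bconst b => rfl
  | lt e₁ e₂ => simp only [Pprop.substQ, Pprop.substConst, exp_substQ_substConst]
  | eq e₁ e₂ => simp only [Pprop.substQ, Pprop.substConst, exp_substQ_substConst]
  | and p₁ p₂ ih₁ ih₂ => simp only [Pprop.substQ, Pprop.substConst, ih₁, ih₂]
  | or p₁ p₂ ih₁ ih₂ => simp only [Pprop.substQ, Pprop.substConst, ih₁, ih₂]
  | not p ih => simp only [Pprop.substQ, Pprop.substConst, ih]

lemma mprop_substQ_substConst (P : MProp) (y : QVar) (d : Val) (x : Var) (c : Val) :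
    (P.substQ y d).substConst x c = (P.substConst x c).substQ y d := by
  induction P with
  | box p => simp only [MProp.substQ, MProp.substConst, pprop_substQ_substConst]
  | dia p => simp only [MProp.substQ, MProp.substConst, pprop_substQ_substConst]
  | and P₁ P₂ ih₁ ih₂ => simp only [MProp.substQ, MProp.substConst, ih₁, ih₂]
  | or P₁ P₂ ih₁ ih₂ => simp only [MProp.substQ, MProp.substConst, ih₁, ih₂]
  | not P ih => simp only [MProp.substQ, MProp.substConst, ih]

/-- **Modal Proposition Constant Substitution**: if every environment `σ ∈ β`
has `σ(x) = c`, and some environment `σ ∈ β` has `σ(x) = c` (so `β` is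
nonempty), then for every existential proposition `p∃ = ∃ ŷ. P□`:
`β ⊨ p∃ ↔ β ⊨ p∃[c/x]`, where the substitution replaces the program variable
`x` by the constant `c` throughout `p∃`. -/
theorem modal_proposition_constant_substitution
    (β : Belief) (x : Var) (c : Val)
    (hall : ∀ σ ∈ β, σ x = c) (hex : ∃ σ ∈ β, σ x = c)
    (ys : List QVar) (P : MProp) :
    ESatAux β ys P ↔ ESatAux β ys (P.substConst x c) := by
  induction ys generalizing P with
  | nil => exact (msat_substConst hall P).symm
  | cons y ys ih =>
    simp only [ESatAux]
    constructor
    · rintro ⟨d, hd⟩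
      exact ⟨d, by rw [← mprop_substQ_substConst]; exact (ih _).mp hd⟩
    · rintro ⟨d, hd⟩
      refine ⟨d, (ih _).mpr ?_⟩
      rwa [mprop_substQ_substConst]
      

end BLIMP
end

section
/- Environment Independence: Let p be a proposition that contains no program variables (p mentions only quantified variables and constants, so its truth under an environment is independent of the environment). Then for every belief state β, modal proposition P□, and list of quantified variables ŷ: if β ⊨ ∃ ŷ. P□ && ◇p then β ⊨ ∃ ŷ. P□ && □p. -/
namespace BLIMP

/-- `e.HasProgVar` holds iff some program variable occurs in `e`. -/
def Exp.HasProgVar : Exp → Prop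
  | .var _ => True
  | .const _ => False
  | .qvar _ => False
  | .add e₁ e₂ => e₁.HasProgVar ∨ e₂.HasProgVar
  | .sub e₁ e₂ => e₁.HasProgVar ∨ e₂.HasProgVar
  | .mul e₁ e₂ => e₁.HasProgVar ∨ e₂.HasProgVar
  | .div e₁ e₂ => e₁.HasProgVar ∨ e₂.HasProgVar

/-- `p.HasProgVar` holds iff some program variable occurs in `p`.
A proposition *contains no program variables* iff `¬ p.HasProgVar`. -/
def Pprop.HasProgVar : Pprop → Prop
  | .bconst _ => False
  | .lt e₁ e₂ => e₁.HasProgVar ∨ e₂.HasProgVar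
  | .eq e₁ e₂ => e₁.HasProgVar ∨ e₂.HasProgVar
  | .and p₁ p₂ => p₁.HasProgVar ∨ p₂.HasProgVar
  | .or p₁ p₂ => p₁.HasProgVar ∨ p₂.HasProgVar
  | .not p => p.HasProgVar

lemma eval_indep {σ σ' : Env} {e : Exp} {c : Val}
    (he : ¬ e.HasProgVar) (h : Eval σ e c) : Eval σ' e c := by
  induction h with
  | var => exact absurd trivial he
  | const => exact .const _ _
  | add _ _ ih₁ ih₂ =>
    exact .add (ih₁ fun h => he (Or.inl h)) (ih₂ fun h => he (Or.inr h))
  | sub _ _ ih₁ ih₂ =>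
    exact .sub (ih₁ fun h => he (Or.inl h)) (ih₂ fun h => he (Or.inr h))
  | mul _ _ ih₁ ih₂ =>
    exact .mul (ih₁ fun h => he (Or.inl h)) (ih₂ fun h => he (Or.inr h))
  | div _ _ ih₁ ih₂ =>
    exact .div (ih₁ fun h => he (Or.inl h)) (ih₂ fun h => he (Or.inr h))

lemma sat_indep {σ σ' : Env} {p : Pprop}
    (hp : ¬ p.HasProgVar) : Sat σ p ↔ Sat σ' p := by
  induction p with
  | bconst b => rfl
  | lt e₁ e₂ =>
    constructor <;>
      exact fun ⟨c₁, c₂, h₁, h₂, hlt⟩ =>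
        ⟨c₁, c₂, eval_indep (fun h => hp (Or.inl h)) h₁,
          eval_indep (fun h => hp (Or.inr h)) h₂, hlt⟩
  | eq e₁ e₂ =>
    constructor <;>
      exact fun ⟨c₁, c₂, h₁, h₂, hlt⟩ =>
        ⟨c₁, c₂, eval_indep (fun h => hp (Or.inl h)) h₁,
          eval_indep (fun h => hp (Or.inr h)) h₂, hlt⟩
  | and p₁ p₂ ih₁ ih₂ =>
    exact and_congr (ih₁ fun h => hp (Or.inl h)) (ih₂ fun h => hp (Or.inr h))
  | or p₁ p₂ ih₁ ih₂ =>
    exact or_congr (ih₁ fun h => hp (Or.inl h)) (ih₂ fun h => hp (Or.inr h))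
  | not p ih => exact not_congr (ih hp)

lemma exp_substQ_noProgVar {e : Exp} (he : ¬ e.HasProgVar) (y : QVar) (c : Val) :
    ¬ (e.substQ y c).HasProgVar := by
  induction e with
  | var x => exact absurd trivial he
  | const => exact he
  | qvar y' =>
    simp only [Exp.substQ]
    split <;> exact id
  | add e₁ e₂ ih₁ ih₂ =>
    exact fun h => h.elim (ih₁ fun h => he (Or.inl h)) (ih₂ fun h => he (Or.inr h))
  | sub e₁ e₂ ih₁ ih₂ =>
    exact fun h => h.elim (ih₁ fun h => he (Or.inl h)) (ih₂ fun h => he (Or.inr h))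
  | mul e₁ e₂ ih₁ ih₂ =>
    exact fun h => h.elim (ih₁ fun h => he (Or.inl h)) (ih₂ fun h => he (Or.inr h))
  | div e₁ e₂ ih₁ ih₂ =>
    exact fun h => h.elim (ih₁ fun h => he (Or.inl h)) (ih₂ fun h => he (Or.inr h))

lemma pprop_substQ_noProgVar {p : Pprop} (hp : ¬ p.HasProgVar) (y : QVar) (c : Val) :
    ¬ (p.substQ y c).HasProgVar := by
  induction p with
  | bconst b => exact hp
  | lt e₁ e₂ =>
    exact fun h => h.elim
      (exp_substQ_noProgVar (fun h => hp (Or.inl h)) y c)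
      (exp_substQ_noProgVar (fun h => hp (Or.inr h)) y c)
  | eq e₁ e₂ =>
    exact fun h => h.elim
      (exp_substQ_noProgVar (fun h => hp (Or.inl h)) y c)
      (exp_substQ_noProgVar (fun h => hp (Or.inr h)) y c)
  | and p₁ p₂ ih₁ ih₂ =>
    exact fun h => h.elim (ih₁ fun h => hp (Or.inl h)) (ih₂ fun h => hp (Or.inr h))
  | or p₁ p₂ ih₁ ih₂ =>
    exact fun h => h.elim (ih₁ fun h => hp (Or.inl h)) (ih₂ fun h => hp (Or.inr h))
  | not p ih => exact ih hp

/-- **Environment Independence** (Theorem B.6): if the proposition `p`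
contains no program variables (it mentions only quantified variables and
constants), then `β ⊨ ∃ ŷ. P□ && ◇p` implies `β ⊨ ∃ ŷ. P□ && □p`. -/
theorem environment_independence
    (p : Pprop) (hp : ¬ p.HasProgVar)
    (β : Belief) (ys : List QVar) (P : MProp)
    (h : ESatAux β ys (.and P (.dia p))) :
    ESatAux β ys (.and P (.box p)) := by
  induction ys generalizing p P with
  | nil =>
    obtain ⟨hP, σ, _, hσ⟩ := h
    exact ⟨hP, fun σ' _ => (sat_indep hp).mp hσ⟩
  | cons y ys ih =>
    obtain ⟨c, hc⟩ := h
    exact ⟨c, ih _ (pprop_substQ_noProgVar hp y c) _ hc⟩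

end BLIMP
end
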